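/- For every A > 0 and every f in the class F, the point (1/2, √3/2) is a critical point of (x,y) ↦ E_f(x,y,A): both partial derivatives vanish there. In particular, ∑_{(m,n)∈ℤ²∖{(0,0)}} (mn + n²/2) · f'((2A/√3)(m² + mn + n²)) = 0. -/

import Mathlib

open Real Filter

noncomputable section

def ClassF (f : ℝ → ℝ) : Prop :=
  ContDiffOn ℝ 2 f (Set.Ioi 0) ∧
  ∀ k : ℕ, k ≤ 2 → ∃ η : ℝ, 1 < η ∧
    (iteratedDeriv k f) =O[atTop] fun r : ℝ => r ^ (-(η + k))

def Qf (x y A : ℝ) (p : ℤ × ℤ) : ℝ :=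
  A * (((p.1 : ℝ) + x * (p.2 : ℝ)) ^ 2 / y + y * (p.2 : ℝ) ^ 2)

def Ef (f : ℝ → ℝ) (x y A : ℝ) : ℝ :=
  ∑' p : {p : ℤ × ℤ // p ≠ 0}, f (Qf x y A p.1)

section aux

lemma sqrt3_pos' : (0:ℝ) < Real.sqrt 3 := Real.sqrt_pos.2 (by norm_num)
lemma sqrt3_sq' : Real.sqrt 3 * Real.sqrt 3 = 3 := Real.mul_self_sqrt (by norm_num)

def rot : ℤ × ℤ ≃ ℤ × ℤ where
  toFun p := (p.1 + p.2, -p.1)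
  invFun p := (-p.2, p.1 + p.2)
  left_inv p := by obtain ⟨a, b⟩ := p; simp
  right_inv p := by obtain ⟨a, b⟩ := p; simp

lemma rot_apply (p : ℤ × ℤ) : rot p = (p.1 + p.2, -p.1) := rfl

lemma rot_ne_zero (p : ℤ × ℤ) : p ≠ 0 ↔ rot p ≠ 0 := by
  obtain ⟨a, b⟩ := p
  simp only [rot_apply, ne_eq, Prod.mk_eq_zero, not_and_or, Prod.mk.injEq]
  constructor <;> intro h <;> omega

def Rot : {p : ℤ × ℤ // p ≠ 0} ≃ {p : ℤ × ℤ // p ≠ 0} :=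
  Equiv.subtypeEquiv rot rot_ne_zero

lemma tsum_orbit_zero (G : ℤ × ℤ → ℝ)
    (hG : ∀ q : ℤ × ℤ, G q + G (rot q) + G (rot (rot q)) + G (rot (rot (rot q))) +
      G (rot (rot (rot (rot q)))) + G (rot (rot (rot (rot (rot q))))) = 0) :
    ∑' p : {p : ℤ × ℤ // p ≠ 0}, G p.1 = 0 := by
  by_cases hs : Summable fun p : {p : ℤ × ℤ // p ≠ 0} => G p.1
  · have hs0 : Summable fun p : {p : ℤ × ℤ // p ≠ 0} => G (p.1) := hs
    set g : {p : ℤ × ℤ // p ≠ 0} → ℝ := fun p => G p.1 with hg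
    have s1 : Summable fun p => g (Rot p) := (Equiv.summable_iff Rot).2 hs
    have s2 : Summable fun p => g (Rot (Rot p)) :=
      (Equiv.summable_iff Rot (f := fun p => g (Rot p))).2 s1
    have s3 : Summable fun p => g (Rot (Rot (Rot p))) :=
      (Equiv.summable_iff Rot (f := fun p => g (Rot (Rot p)))).2 s2
    have s4 : Summable fun p => g (Rot (Rot (Rot (Rot p)))) :=
      (Equiv.summable_iff Rot (f := fun p => g (Rot (Rot (Rot p))))).2 s3
    have s5 : Summable fun p => g (Rot (Rot (Rot (Rot (Rot p))))) :=
      (Equiv.summable_iff Rot (f := fun p => g (Rot (Rot (Rot (Rot p)))))).2 s4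
    have e1 : ∑' p, g (Rot p) = ∑' p, g p := Rot.tsum_eq g
    have e2 : ∑' p, g (Rot (Rot p)) = ∑' p, g p :=
      (Rot.tsum_eq (fun q => g (Rot q))).trans e1
    have e3 : ∑' p, g (Rot (Rot (Rot p))) = ∑' p, g p :=
      (Rot.tsum_eq (fun q => g (Rot (Rot q)))).trans e2
    have e4 : ∑' p, g (Rot (Rot (Rot (Rot p)))) = ∑' p, g p :=
      (Rot.tsum_eq (fun q => g (Rot (Rot (Rot q))))).trans e3
    have e5 : ∑' p, g (Rot (Rot (Rot (Rot (Rot p))))) = ∑' p, g p :=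
      (Rot.tsum_eq (fun q => g (Rot (Rot (Rot (Rot q)))))).trans e4
    have hz : ∑' p : {p : ℤ × ℤ // p ≠ 0}, (g p + g (Rot p) + g (Rot (Rot p)) +
        g (Rot (Rot (Rot p))) + g (Rot (Rot (Rot (Rot p)))) +
        g (Rot (Rot (Rot (Rot (Rot p)))))) = 0 :=
      (tsum_congr (fun p : {p : ℤ × ℤ // p ≠ 0} => hG p.1)).trans tsum_zero
    rw [Summable.tsum_add ((((hs.add s1).add s2).add s3).add s4) s5,
      Summable.tsum_add (((hs.add s1).add s2).add s3) s4,
      Summable.tsum_add ((hs.add s1).add s2) s3,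
      Summable.tsum_add (hs.add s1) s2,
      Summable.tsum_add hs s1, e1, e2, e3, e4, e5] at hz
    linarith
  · exact tsum_eq_zero_of_not_summable hs


def Bf (p : ℤ × ℤ) : ℝ := (p.1 : ℝ) ^ 2 + (p.2 : ℝ) ^ 2


lemma Bf_nonneg (p : ℤ × ℤ) : 0 ≤ Bf p := by unfold Bf; positivity

lemma Bf_ge_one {p : ℤ × ℤ} (hp : p ≠ 0) : (1:ℝ) ≤ Bf p := by
  obtain ⟨m, n⟩ := p
  have hmn : m ≠ 0 ∨ n ≠ 0 := by
    by_contra h; push_neg at h; exact hp (by simp [Prod.ext_iff, h.1, h.2])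
  have : (1:ℤ) ≤ m ^ 2 + n ^ 2 := by
    rcases hmn with h | h
    · nlinarith [sq_nonneg n, Int.one_le_abs h, sq_abs m, abs_nonneg m]
    · nlinarith [sq_nonneg m, Int.one_le_abs h, sq_abs n, abs_nonneg n]
  unfold Bf; exact_mod_cast this

lemma decay_bound {g : ℝ → ℝ} {s : ℝ} (hs : 0 < s) (hg : ContinuousOn g (Set.Ioi 0))
    (hO : g =O[atTop] fun r : ℝ => r ^ (-s)) {δ : ℝ} (hδ : 0 < δ) :
    ∃ C : ℝ, 0 < C ∧ ∀ r, δ ≤ r → |g r| ≤ C * r ^ (-s) := by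
  obtain ⟨c, hc⟩ := hO.bound
  rw [eventually_atTop] at hc
  obtain ⟨R, hR⟩ := hc
  set R' : ℝ := max R δ with hR'
  have hR'pos : 0 < R' := lt_of_lt_of_le hδ (le_max_right _ _)
  have hcont : ContinuousOn g (Set.Icc δ R') :=
    hg.mono (fun x hx => lt_of_lt_of_le hδ hx.1)
  obtain ⟨M, hM⟩ := (isCompact_Icc).exists_bound_of_continuousOn hcont
  refine ⟨max c 0 + max M 0 * R' ^ s + 1, by positivity, fun r hr => ?_⟩
  have hrpos : 0 < r := lt_of_lt_of_le hδ hr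
  have hrp : 0 < r ^ (-s) := Real.rpow_pos_of_pos hrpos _
  rcases le_or_gt r R' with h | h
  · have h1 : |g r| ≤ M := by simpa using hM r ⟨hr, h⟩
    have h2 : R' ^ (-s) ≤ r ^ (-s) :=
      Real.rpow_le_rpow_of_nonpos hrpos h (neg_nonpos.2 hs.le)
    have h3 : max M 0 * (R' ^ s * R' ^ (-s)) = max M 0 := by
      rw [← Real.rpow_add hR'pos]; simp
    have h4 : max M 0 * (R' ^ s * r ^ (-s)) ≥ max M 0 := by
      calc max M 0 * (R' ^ s * r ^ (-s)) ≥ max M 0 * (R' ^ s * R' ^ (-s)) := by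
            apply mul_le_mul_of_nonneg_left _ (le_max_right M 0)
            exact mul_le_mul_of_nonneg_left h2 (Real.rpow_pos_of_pos hR'pos s).le
        _ = max M 0 := h3
    have : |g r| ≤ max M 0 * (R' ^ s * r ^ (-s)) := le_trans (h1.trans (le_max_left M 0)) h4
    nlinarith [mul_nonneg (le_max_right c 0) hrp.le, hrp]
  · have h1 : ‖g r‖ ≤ c * ‖r ^ (-s)‖ := hR r (le_trans (le_max_left R δ) h.le)
    rw [Real.norm_eq_abs, Real.norm_eq_abs, abs_of_pos hrp] at h1
    nlinarith [mul_nonneg (mul_nonneg (le_max_right M 0) (Real.rpow_pos_of_pos hR'pos s).le) hrp.le,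
      hrp, mul_le_mul_of_nonneg_right (le_max_left c 0) hrp.le]

lemma summable_Bf {η : ℝ} (hη : 1 < η) :
    Summable fun p : {p : ℤ × ℤ // p ≠ 0} => Bf p.1 ^ (-η) := by
  have h1 : Summable fun x : Fin 2 → ℤ => ‖x‖ ^ (-(2 * η)) :=
    EisensteinSeries.summable_one_div_norm_rpow (by linarith)
  have h2 : Summable fun p : ℤ × ℤ => ‖(finTwoArrowEquiv ℤ).symm p‖ ^ (-(2 * η)) :=
    ((finTwoArrowEquiv ℤ).symm.summable_iff).2 h1
  have h3 := h2.subtype {p : ℤ × ℤ | p ≠ 0}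
  apply Summable.of_nonneg_of_le (fun p => Real.rpow_nonneg (Bf_nonneg _) _) _ h3
  rintro ⟨⟨m, n⟩, hp⟩
  simp only [Function.comp_apply, finTwoArrowEquiv_symm_apply, EisensteinSeries.norm_eq_max_natAbs]
  set N : ℝ := ((max (m.natAbs) (n.natAbs) : ℕ) : ℝ) with hN
  have hmn : m ≠ 0 ∨ n ≠ 0 := by
    by_contra h; push_neg at h; exact hp (by simp [Prod.ext_iff, h.1, h.2])
  have hN1 : 1 ≤ N := by
    have h0 : 1 ≤ max (m.natAbs) (n.natAbs) := by
      rcases hmn with h | h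
      · have := Int.natAbs_pos.2 h; omega
      · have := Int.natAbs_pos.2 h; omega
    rw [hN]; exact_mod_cast h0
  have hNpos : 0 < N := lt_of_lt_of_le one_pos hN1
  have hle : N ^ 2 ≤ Bf (m, n) := by
    have hm : ((m.natAbs : ℕ) : ℝ) ^ 2 = (m : ℝ) ^ 2 := by
      push_cast [Nat.cast_natAbs]; simp [sq_abs]
    have hn : ((n.natAbs : ℕ) : ℝ) ^ 2 = (n : ℝ) ^ 2 := by
      push_cast [Nat.cast_natAbs]; simp [sq_abs]
    unfold Bf
    rcases max_cases (m.natAbs) (n.natAbs) with ⟨h, _⟩ | ⟨h, _⟩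
    · rw [hN, h, hm]; nlinarith [sq_nonneg ((n : ℝ))]
    · rw [hN, h, hn]; nlinarith [sq_nonneg ((m : ℝ))]
  calc (Bf (m, n)) ^ (-η) ≤ (N ^ 2) ^ (-η) := by
        apply Real.rpow_le_rpow_of_nonpos (by positivity) hle (by linarith)
    _ = N ^ (-(2 * η)) := by
        rw [← Real.rpow_natCast N 2, ← Real.rpow_mul hNpos.le]; norm_num


lemma deriv_contOn {f : ℝ → ℝ} (hf : ContDiffOn ℝ 2 f (Set.Ioi 0)) :
    ContinuousOn (deriv f) (Set.Ioi 0) := by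
  have h2 : ContDiffOn ℝ ((1:ℕ) + 1) f (Set.Ioi 0) := by exact_mod_cast hf
  exact (((contDiffOn_succ_iff_deriv_of_isOpen isOpen_Ioi).1 h2).2.2).continuousOn

lemma f_decay {f : ℝ → ℝ} (hf : ClassF f) :
    ∃ η₀ : ℝ, 1 < η₀ ∧ f =O[atTop] fun r : ℝ => r ^ (-η₀) := by
  obtain ⟨η, hη, hO⟩ := hf.2 0 (by norm_num)
  refine ⟨η, hη, ?_⟩
  simpa [iteratedDeriv_zero] using hO

lemma deriv_f_decay {f : ℝ → ℝ} (hf : ClassF f) :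
    ∃ η : ℝ, 1 < η ∧ deriv f =O[atTop] fun r : ℝ => r ^ (-(η + 1)) := by
  obtain ⟨η, hη, hO⟩ := hf.2 1 (by norm_num)
  refine ⟨η, hη, ?_⟩
  rw [iteratedDeriv_one] at hO
  simpa using hO

lemma Qf_eq_x (A : ℝ) (q : ℤ × ℤ) :
    Qf (1/2) (Real.sqrt 3 / 2) A q
      = 2 * A / Real.sqrt 3 * ((q.1 : ℝ) ^ 2 + (q.1 : ℝ) * (q.2 : ℝ) + (q.2 : ℝ) ^ 2) := by
  obtain ⟨a, b⟩ := q
  show A * (((a:ℝ) + 1/2 * b) ^ 2 / (Real.sqrt 3 / 2) + Real.sqrt 3 / 2 * (b:ℝ) ^ 2) = _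
  have h3 := sqrt3_sq'
  have hs3 := sqrt3_pos'.ne'
  field_simp
  linear_combination (A * (b:ℝ) ^ 2) * h3

lemma Qf_lower_x {A : ℝ} (hA : 0 < A) {t : ℝ} (ht : t ∈ Set.Ioo (0:ℝ) 1) (p : ℤ × ℤ) :
    A * Real.sqrt 3 / 8 * Bf p ≤ Qf t (Real.sqrt 3 / 2) A p := by
  obtain ⟨m, n⟩ := p
  obtain ⟨ht0, ht1⟩ := ht
  set u : ℝ := (m : ℝ) + t * n with hu
  have h3 := sqrt3_sq'
  have hs3 := sqrt3_pos'
  have hinner : ((m:ℝ) ^ 2 + (n:ℝ) ^ 2) / 4 ≤ u ^ 2 + (n:ℝ) ^ 2 := by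
    nlinarith [sq_nonneg (7 * (t * (n:ℝ)) + 4 * m), sq_nonneg ((n:ℝ)),
      mul_nonneg (mul_nonneg (by linarith : (0:ℝ) ≤ 1 - t) (by linarith : (0:ℝ) ≤ 1 + t))
        (sq_nonneg (n:ℝ))]
  have hdiv : Real.sqrt 3 / 2 * u ^ 2 ≤ u ^ 2 / (Real.sqrt 3 / 2) := by
    rw [le_div_iff₀ (by positivity)]
    nlinarith [sq_nonneg u]
  have hstep : A * (Real.sqrt 3 / 2 * (u ^ 2 + (n:ℝ) ^ 2)) ≤ Qf t (Real.sqrt 3 / 2) A (m, n) := by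
    show _ ≤ A * (u ^ 2 / (Real.sqrt 3 / 2) + Real.sqrt 3 / 2 * (n:ℝ) ^ 2)
    apply mul_le_mul_of_nonneg_left _ hA.le
    nlinarith []
  refine le_trans ?_ hstep
  have h8 : A * Real.sqrt 3 / 8 * Bf (m, n)
      = A * (Real.sqrt 3 / 2 * (((m:ℝ) ^ 2 + (n:ℝ) ^ 2) / 4)) := by unfold Bf; ring
  rw [h8]
  apply mul_le_mul_of_nonneg_left _ hA.le
  apply mul_le_mul_of_nonneg_left hinner (by positivity)

lemma hasDerivAt_term_x (f : ℝ → ℝ) (hf : ContDiffOn ℝ 2 f (Set.Ioi 0)) {A : ℝ}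
    (t : ℝ) (p : ℤ × ℤ) (hQ : 0 < Qf t (Real.sqrt 3 / 2) A p) :
    HasDerivAt (fun x => f (Qf x (Real.sqrt 3 / 2) A p))
      (deriv f (Qf t (Real.sqrt 3 / 2) A p) *
        (A * (2 * ((p.1 : ℝ) + t * p.2) * p.2 / (Real.sqrt 3 / 2)))) t := by
  have hq : HasDerivAt (fun x => Qf x (Real.sqrt 3 / 2) A p)
      (A * (2 * ((p.1 : ℝ) + t * p.2) * p.2 / (Real.sqrt 3 / 2))) t := by
    have h1 : HasDerivAt (fun x : ℝ => ((p.1 : ℝ) + x * p.2)) (p.2 : ℝ) t := by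
      simpa using ((hasDerivAt_id t).mul_const (p.2 : ℝ)).const_add (p.1 : ℝ)
    have h2 := ((h1.pow 2).div_const (Real.sqrt 3 / 2)).add_const
      (Real.sqrt 3 / 2 * (p.2 : ℝ) ^ 2)
    have h4 := h2.const_mul A
    exact h4.congr_deriv (by ring)
  have hdf : HasDerivAt f (deriv f (Qf t (Real.sqrt 3 / 2) A p)) (Qf t (Real.sqrt 3 / 2) A p) := by
    have hca : ContDiffAt ℝ 2 f (Qf t (Real.sqrt 3 / 2) A p) :=
      hf.contDiffAt (isOpen_Ioi.mem_nhds hQ)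
    exact (hca.differentiableAt (by norm_num)).hasDerivAt
  exact hdf.comp t hq

lemma hasDerivAt_x (f : ℝ → ℝ) (hf : ClassF f) (A : ℝ) (hA : 0 < A) :
    HasDerivAt (fun t => ∑' p : {p : ℤ × ℤ // p ≠ 0}, f (Qf t (Real.sqrt 3 / 2) A p.1))
      (∑' p : {p : ℤ × ℤ // p ≠ 0}, deriv f (Qf (1/2) (Real.sqrt 3 / 2) A p.1) *
        (A * (2 * ((p.1.1 : ℝ) + (1/2) * p.1.2) * p.1.2 / (Real.sqrt 3 / 2)))) (1/2 : ℝ) := by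
  obtain ⟨η, hη, hO1⟩ := deriv_f_decay hf
  obtain ⟨η₀, hη₀, hO0⟩ := f_decay hf
  have hs3 := sqrt3_pos'
  set c : ℝ := A * Real.sqrt 3 / 8 with hc
  have hcpos : 0 < c := by positivity
  obtain ⟨C₁, hC₁pos, hC₁⟩ := decay_bound (by linarith : (0:ℝ) < η + 1) (deriv_contOn hf.1) hO1 hcpos
  obtain ⟨C₀, hC₀pos, hC₀⟩ := decay_bound (by linarith : (0:ℝ) < η₀) hf.1.continuousOn hO0 hcpos
  have hmem : (1/2 : ℝ) ∈ Set.Ioo (0:ℝ) 1 := by constructor <;> norm_num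
  have hQlow : ∀ t ∈ Set.Ioo (0:ℝ) 1, ∀ p : {p : ℤ × ℤ // p ≠ 0},
      c * Bf p.1 ≤ Qf t (Real.sqrt 3 / 2) A p.1 := fun t ht p => Qf_lower_x hA ht p.1
  have hcB : ∀ p : {p : ℤ × ℤ // p ≠ 0}, c ≤ c * Bf p.1 := fun p => by
    nlinarith [Bf_ge_one p.2, hcpos]
  have hQδ : ∀ t ∈ Set.Ioo (0:ℝ) 1, ∀ p : {p : ℤ × ℤ // p ≠ 0},
      c ≤ Qf t (Real.sqrt 3 / 2) A p.1 := fun t ht p => le_trans (hcB p) (hQlow t ht p)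
  have hQpos : ∀ t ∈ Set.Ioo (0:ℝ) 1, ∀ p : {p : ℤ × ℤ // p ≠ 0},
      0 < Qf t (Real.sqrt 3 / 2) A p.1 := fun t ht p => lt_of_lt_of_le hcpos (hQδ t ht p)
  set K : ℝ := C₁ * c ^ (-(η+1)) * (6 * A / Real.sqrt 3) with hK
  have hu : Summable (fun p : {p : ℤ × ℤ // p ≠ 0} => K * Bf p.1 ^ (-η)) :=
    (summable_Bf hη).mul_left K
  -- the summable bound on derivatives
  have hg' : ∀ (p : {p : ℤ × ℤ // p ≠ 0}) (t : ℝ), t ∈ Set.Ioo (0:ℝ) 1 →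
      ‖deriv f (Qf t (Real.sqrt 3 / 2) A p.1) *
        (A * (2 * ((p.1.1 : ℝ) + t * p.1.2) * p.1.2 / (Real.sqrt 3 / 2)))‖ ≤ K * Bf p.1 ^ (-η) := by
    intro p t ht
    obtain ⟨⟨m, n⟩, hp⟩ := p
    set Q : ℝ := Qf t (Real.sqrt 3 / 2) A (m, n) with hQdef
    have hB1 : (1:ℝ) ≤ Bf (m, n) := Bf_ge_one hp
    have hBpos : (0:ℝ) < Bf (m, n) := lt_of_lt_of_le one_pos hB1
    have h1 : |deriv f Q| ≤ C₁ * Q ^ (-(η+1)) := hC₁ Q (hQδ t ht ⟨(m,n), hp⟩)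
    have h2 : Q ^ (-(η+1)) ≤ (c * Bf (m, n)) ^ (-(η+1)) :=
      Real.rpow_le_rpow_of_nonpos (by positivity) (hQlow t ht ⟨(m,n), hp⟩) (by linarith)
    have hW : |A * (2 * ((m : ℝ) + t * n) * n / (Real.sqrt 3 / 2))|
        ≤ 6 * A / Real.sqrt 3 * Bf (m, n) := by
      have e : A * (2 * ((m : ℝ) + t * n) * n / (Real.sqrt 3 / 2))
          = 4 * A / Real.sqrt 3 * (((m : ℝ) + t * n) * n) := by
        field_simp
        ring
      rw [e, abs_mul, abs_of_pos (by positivity : (0:ℝ) < 4 * A / Real.sqrt 3)]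
      have hw : |((m : ℝ) + t * n) * n| ≤ 3/2 * Bf (m, n) := by
        unfold Bf
        obtain ⟨ht0, ht1⟩ := ht
        rw [abs_le]
        constructor
        · nlinarith [sq_nonneg (3 * (m:ℝ) + n), sq_nonneg ((n:ℝ)),
            mul_nonneg ht0.le (sq_nonneg (n:ℝ)),
            mul_nonneg (by linarith : (0:ℝ) ≤ 1 - t) (sq_nonneg (n:ℝ))]
        · nlinarith [sq_nonneg (3 * (m:ℝ) - n), sq_nonneg ((n:ℝ)),
            mul_nonneg ht0.le (sq_nonneg (n:ℝ)),
            mul_nonneg (by linarith : (0:ℝ) ≤ 1 - t) (sq_nonneg (n:ℝ))]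
      calc 4 * A / Real.sqrt 3 * |((m : ℝ) + t * n) * n|
          ≤ 4 * A / Real.sqrt 3 * (3/2 * Bf (m, n)) :=
            mul_le_mul_of_nonneg_left hw (by positivity)
        _ = 6 * A / Real.sqrt 3 * Bf (m, n) := by ring
    rw [Real.norm_eq_abs, abs_mul]
    calc |deriv f Q| * |A * (2 * ((m : ℝ) + t * n) * n / (Real.sqrt 3 / 2))|
        ≤ (C₁ * (c * Bf (m, n)) ^ (-(η+1))) * (6 * A / Real.sqrt 3 * Bf (m, n)) := by
          apply mul_le_mul (h1.trans (mul_le_mul_of_nonneg_left h2 hC₁pos.le)) hW (abs_nonneg _)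
          positivity
      _ = K * Bf (m, n) ^ (-η) := by
          rw [Real.mul_rpow hcpos.le hBpos.le, show -η = -(η+1)+1 by ring,
            Real.rpow_add_one hBpos.ne']
          ring
  -- summability at the base point
  have hsum0 : Summable (fun p : {p : ℤ × ℤ // p ≠ 0} => f (Qf (1/2) (Real.sqrt 3 / 2) A p.1)) := by
    apply Summable.of_norm_bounded ((summable_Bf hη₀).mul_left (C₀ * c ^ (-η₀)))
    intro p
    have hB1 : (1:ℝ) ≤ Bf p.1 := Bf_ge_one p.2
    have hBpos : (0:ℝ) < Bf p.1 := lt_of_lt_of_le one_pos hB1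
    have h1 : |f (Qf (1/2) (Real.sqrt 3 / 2) A p.1)| ≤ C₀ * (Qf (1/2) (Real.sqrt 3 / 2) A p.1) ^ (-η₀) :=
      hC₀ _ (hQδ _ hmem p)
    have h2 : (Qf (1/2) (Real.sqrt 3 / 2) A p.1) ^ (-η₀) ≤ (c * Bf p.1) ^ (-η₀) :=
      Real.rpow_le_rpow_of_nonpos (by positivity) (hQlow _ hmem p) (by linarith)
    rw [Real.norm_eq_abs]
    calc |f (Qf (1/2) (Real.sqrt 3 / 2) A p.1)| ≤ C₀ * (c * Bf p.1) ^ (-η₀) :=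
          h1.trans (mul_le_mul_of_nonneg_left h2 hC₀pos.le)
      _ = (C₀ * c ^ (-η₀)) * Bf p.1 ^ (-η₀) := by
          rw [Real.mul_rpow hcpos.le hBpos.le]; ring
  exact hasDerivAt_tsum_of_isPreconnected hu isOpen_Ioo (convex_Ioo (0:ℝ) 1).isPreconnected
    (fun p t ht => hasDerivAt_term_x f hf.1 t p.1 (hQpos t ht p)) hg' hmem hsum0 hmem

lemma sqrt3_mem : Real.sqrt 3 / 2 ∈ Set.Ioo (1/2 : ℝ) (3/2) := by
  have h := sqrt3_sq'
  have h0 := sqrt3_pos'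
  constructor
  · nlinarith
  · nlinarith

lemma Qf_lower_y {A : ℝ} (hA : 0 < A) {y : ℝ} (hy : y ∈ Set.Ioo (1/2 : ℝ) (3/2)) (p : ℤ × ℤ) :
    A / 4 * Bf p ≤ Qf (1/2) y A p := by
  obtain ⟨m, n⟩ := p
  obtain ⟨hy1, hy2⟩ := hy
  have hy0 : 0 < y := by linarith
  have h1 : ((m : ℝ) + 1/2 * n) ^ 2 / (3/2 : ℝ) ≤ ((m : ℝ) + 1/2 * n) ^ 2 / y :=
    div_le_div_of_nonneg_left (sq_nonneg _) hy0 (by linarith)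
  have h2 : ((m:ℝ) ^ 2 + (n:ℝ) ^ 2) / 2 ≤ ((m : ℝ) + 1/2 * n) ^ 2 + (n:ℝ) ^ 2 := by
    nlinarith [sq_nonneg ((m:ℝ) + n), sq_nonneg ((n:ℝ))]
  show A / 4 * Bf (m, n) ≤ A * (((m : ℝ) + 1/2 * n) ^ 2 / y + y * (n:ℝ) ^ 2)
  unfold Bf
  have h3 : A * (((m : ℝ) + 1/2 * n) ^ 2 / (3/2) + 1/2 * (n:ℝ) ^ 2)
      ≤ A * (((m : ℝ) + 1/2 * n) ^ 2 / y + y * (n:ℝ) ^ 2) := by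
    apply mul_le_mul_of_nonneg_left _ hA.le
    have : (1:ℝ)/2 * (n:ℝ)^2 ≤ y * (n:ℝ)^2 :=
      mul_le_mul_of_nonneg_right (by linarith) (sq_nonneg _)
    linarith
  refine le_trans ?_ h3
  nlinarith [sq_nonneg ((m : ℝ) + 1/2 * n), sq_nonneg ((n:ℝ)), hA]

lemma hasDerivAt_term_y (f : ℝ → ℝ) (hf : ContDiffOn ℝ 2 f (Set.Ioi 0)) {A : ℝ}
    (y : ℝ) (hy0 : 0 < y) (p : ℤ × ℤ) (hQ : 0 < Qf (1/2) y A p) :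
    HasDerivAt (fun z => f (Qf (1/2) z A p))
      (deriv f (Qf (1/2) y A p) *
        (A * ((p.2 : ℝ) ^ 2 - ((p.1 : ℝ) + 1/2 * p.2) ^ 2 / y ^ 2))) y := by
  have hq : HasDerivAt (fun z => Qf (1/2) z A p)
      (A * ((p.2 : ℝ) ^ 2 - ((p.1 : ℝ) + 1/2 * p.2) ^ 2 / y ^ 2)) y := by
    have h0 : HasDerivAt (fun z : ℝ => ((p.1 : ℝ) + 1/2 * p.2) ^ 2 / z)
        (((p.1 : ℝ) + 1/2 * p.2) ^ 2 * -(y ^ 2)⁻¹) y := by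
      have := (hasDerivAt_inv hy0.ne').const_mul (((p.1 : ℝ) + 1/2 * p.2) ^ 2)
      simpa [div_eq_mul_inv] using this
    have h1 : HasDerivAt (fun z : ℝ => z * (p.2 : ℝ) ^ 2) ((p.2 : ℝ) ^ 2) y := by
      simpa using (hasDerivAt_id y).mul_const ((p.2 : ℝ) ^ 2)
    have h2 := (h0.add h1).const_mul A
    exact h2.congr_deriv (by ring)
  have hdf : HasDerivAt f (deriv f (Qf (1/2) y A p)) (Qf (1/2) y A p) := by
    have hca : ContDiffAt ℝ 2 f (Qf (1/2) y A p) := hf.contDiffAt (isOpen_Ioi.mem_nhds hQ)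
    exact (hca.differentiableAt (by norm_num)).hasDerivAt
  exact hdf.comp y hq


lemma weight_bound_y {A y : ℝ} (hA : 0 < A) (hy1 : 1/2 < y) (hy2 : y < 3/2) (m n : ℤ) :
    |A * ((n : ℝ) ^ 2 - ((m : ℝ) + 1/2 * n) ^ 2 / y ^ 2)| ≤ 8 * A * Bf (m, n) := by
  have hy0 : (0:ℝ) < y := by linarith
  have hd0 : (0:ℝ) ≤ ((m : ℝ) + 1/2 * n) ^ 2 / y ^ 2 := by positivity
  have hd4 : ((m : ℝ) + 1/2 * n) ^ 2 / y ^ 2 ≤ 4 * ((m : ℝ) + 1/2 * n) ^ 2 := by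
    rw [div_le_iff₀ (by positivity)]
    nlinarith [mul_nonneg (sq_nonneg ((m : ℝ) + 1/2 * n))
        (mul_nonneg (by linarith : (0:ℝ) ≤ 2*y - 1) (by linarith : (0:ℝ) ≤ 2*y + 1))]
  have hu2 : ((m : ℝ) + 1/2 * n) ^ 2 ≤ 2 * (m:ℝ)^2 + (n:ℝ)^2 / 2 := by
    nlinarith [sq_nonneg ((m:ℝ) - 1/2 * n)]
  have hd48 : ((m : ℝ) + 1/2 * n) ^ 2 / y ^ 2 ≤ 8 * (m:ℝ)^2 + 2 * (n:ℝ)^2 := by linarith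
  have hAd := mul_le_mul_of_nonneg_left hd48 hA.le
  have hAd0 := mul_nonneg hA.le hd0
  have hAm := mul_nonneg hA.le (sq_nonneg ((m:ℝ)))
  have hAn := mul_nonneg hA.le (sq_nonneg ((n:ℝ)))
  unfold Bf
  rw [abs_le]
  constructor
  · nlinarith [hAd, hAd0, hAm, hAn]
  · nlinarith [hAd, hAd0, hAm, hAn]

lemma hasDerivAt_y (f : ℝ → ℝ) (hf : ClassF f) (A : ℝ) (hA : 0 < A) :
    HasDerivAt (fun y => ∑' p : {p : ℤ × ℤ // p ≠ 0}, f (Qf (1/2) y A p.1))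
      (∑' p : {p : ℤ × ℤ // p ≠ 0}, deriv f (Qf (1/2) (Real.sqrt 3 / 2) A p.1) *
        (A * ((p.1.2 : ℝ) ^ 2 - ((p.1.1 : ℝ) + 1/2 * p.1.2) ^ 2 / (Real.sqrt 3 / 2) ^ 2)))
      (Real.sqrt 3 / 2) := by
  obtain ⟨η, hη, hO1⟩ := deriv_f_decay hf
  obtain ⟨η₀, hη₀, hO0⟩ := f_decay hf
  set c : ℝ := A / 4 with hc
  have hcpos : 0 < c := by positivity
  obtain ⟨C₁, hC₁pos, hC₁⟩ := decay_bound (by linarith : (0:ℝ) < η + 1) (deriv_contOn hf.1) hO1 hcpos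
  obtain ⟨C₀, hC₀pos, hC₀⟩ := decay_bound (by linarith : (0:ℝ) < η₀) hf.1.continuousOn hO0 hcpos
  have hmem : Real.sqrt 3 / 2 ∈ Set.Ioo (1/2 : ℝ) (3/2) := sqrt3_mem
  have hQlow : ∀ y ∈ Set.Ioo (1/2 : ℝ) (3/2), ∀ p : {p : ℤ × ℤ // p ≠ 0},
      c * Bf p.1 ≤ Qf (1/2) y A p.1 := fun y hy p => Qf_lower_y hA hy p.1
  have hcB : ∀ p : {p : ℤ × ℤ // p ≠ 0}, c ≤ c * Bf p.1 := fun p => by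
    nlinarith [Bf_ge_one p.2, hcpos]
  have hQδ : ∀ y ∈ Set.Ioo (1/2 : ℝ) (3/2), ∀ p : {p : ℤ × ℤ // p ≠ 0},
      c ≤ Qf (1/2) y A p.1 := fun y hy p => le_trans (hcB p) (hQlow y hy p)
  have hQpos : ∀ y ∈ Set.Ioo (1/2 : ℝ) (3/2), ∀ p : {p : ℤ × ℤ // p ≠ 0},
      0 < Qf (1/2) y A p.1 := fun y hy p => lt_of_lt_of_le hcpos (hQδ y hy p)
  set K : ℝ := C₁ * c ^ (-(η+1)) * (8 * A) with hK
  have hu : Summable (fun p : {p : ℤ × ℤ // p ≠ 0} => K * Bf p.1 ^ (-η)) :=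
    (summable_Bf hη).mul_left K
  have hg' : ∀ (p : {p : ℤ × ℤ // p ≠ 0}) (y : ℝ), y ∈ Set.Ioo (1/2 : ℝ) (3/2) →
      ‖deriv f (Qf (1/2) y A p.1) *
        (A * ((p.1.2 : ℝ) ^ 2 - ((p.1.1 : ℝ) + 1/2 * p.1.2) ^ 2 / y ^ 2))‖ ≤ K * Bf p.1 ^ (-η) := by
    intro p y hy
    obtain ⟨⟨m, n⟩, hp⟩ := p
    obtain ⟨hy1, hy2⟩ := hy
    have hy0 : (0:ℝ) < y := by linarith
    set Q : ℝ := Qf (1/2) y A (m, n) with hQdef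
    have hB1 : (1:ℝ) ≤ Bf (m, n) := Bf_ge_one hp
    have hBpos : (0:ℝ) < Bf (m, n) := lt_of_lt_of_le one_pos hB1
    have h1 : |deriv f Q| ≤ C₁ * Q ^ (-(η+1)) := hC₁ Q (hQδ y ⟨hy1, hy2⟩ ⟨(m,n), hp⟩)
    have h2 : Q ^ (-(η+1)) ≤ (c * Bf (m, n)) ^ (-(η+1)) :=
      Real.rpow_le_rpow_of_nonpos (by positivity) (hQlow y ⟨hy1, hy2⟩ ⟨(m,n), hp⟩) (by linarith)
    have hW : |A * ((n : ℝ) ^ 2 - ((m : ℝ) + 1/2 * n) ^ 2 / y ^ 2)| ≤ 8 * A * Bf (m, n) :=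
      weight_bound_y hA hy1 hy2 m n
    rw [Real.norm_eq_abs, abs_mul]
    calc |deriv f Q| * |A * ((n : ℝ) ^ 2 - ((m : ℝ) + 1/2 * n) ^ 2 / y ^ 2)|
        ≤ (C₁ * (c * Bf (m, n)) ^ (-(η+1))) * (8 * A * Bf (m, n)) := by
          apply mul_le_mul (h1.trans (mul_le_mul_of_nonneg_left h2 hC₁pos.le)) hW (abs_nonneg _)
          positivity
      _ = K * Bf (m, n) ^ (-η) := by
          rw [Real.mul_rpow hcpos.le hBpos.le, show -η = -(η+1)+1 by ring,
            Real.rpow_add_one hBpos.ne']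
          ring
  have hsum0 : Summable (fun p : {p : ℤ × ℤ // p ≠ 0} =>
      f (Qf (1/2) (Real.sqrt 3 / 2) A p.1)) := by
    apply Summable.of_norm_bounded ((summable_Bf hη₀).mul_left (C₀ * c ^ (-η₀)))
    intro p
    have hB1 : (1:ℝ) ≤ Bf p.1 := Bf_ge_one p.2
    have hBpos : (0:ℝ) < Bf p.1 := lt_of_lt_of_le one_pos hB1
    have h1 : |f (Qf (1/2) (Real.sqrt 3 / 2) A p.1)|
        ≤ C₀ * (Qf (1/2) (Real.sqrt 3 / 2) A p.1) ^ (-η₀) := hC₀ _ (hQδ _ hmem p)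
    have h2 : (Qf (1/2) (Real.sqrt 3 / 2) A p.1) ^ (-η₀) ≤ (c * Bf p.1) ^ (-η₀) :=
      Real.rpow_le_rpow_of_nonpos (by positivity) (hQlow _ hmem p) (by linarith)
    rw [Real.norm_eq_abs]
    calc |f (Qf (1/2) (Real.sqrt 3 / 2) A p.1)| ≤ C₀ * (c * Bf p.1) ^ (-η₀) :=
          h1.trans (mul_le_mul_of_nonneg_left h2 hC₀pos.le)
      _ = (C₀ * c ^ (-η₀)) * Bf p.1 ^ (-η₀) := by
          rw [Real.mul_rpow hcpos.le hBpos.le]; ring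
  exact hasDerivAt_tsum_of_isPreconnected hu isOpen_Ioo (convex_Ioo (1/2:ℝ) (3/2)).isPreconnected
    (fun p y hy => hasDerivAt_term_y f hf.1 y (by linarith [hy.1]) p.1 (hQpos y hy p)) hg' hmem
    hsum0 hmem

end aux

/-- For every `A > 0` and `f ∈ F`, the triangular lattice point `(1/2, √3/2)` is a critical
point of `(x,y) ↦ E_f(x,y,A)`; in particular the corresponding lattice sum vanishes. -/
theorem triangular_is_critical_point (f : ℝ → ℝ) (hf : ClassF f) (A : ℝ) (hA : 0 < A) :
    HasDerivAt (fun t => Ef f t (Real.sqrt 3 / 2) A) 0 (1 / 2 : ℝ) ∧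
    HasDerivAt (fun t => Ef f (1 / 2) t A) 0 (Real.sqrt 3 / 2) ∧
    (∑' p : {p : ℤ × ℤ // p ≠ 0},
      ((p.1.1 : ℝ) * (p.1.2 : ℝ) + (p.1.2 : ℝ) ^ 2 / 2) *
        deriv f ((2 * A / Real.sqrt 3) *
          ((p.1.1 : ℝ) ^ 2 + (p.1.1 : ℝ) * (p.1.2 : ℝ) + (p.1.2 : ℝ) ^ 2))) = 0 := by
  have h34 : ((Real.sqrt 3 / 2) ^ 2 : ℝ) = 3/4 := by
    rw [div_pow, Real.sq_sqrt (by norm_num : (3:ℝ) ≥ 0)]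
    norm_num
  refine ⟨?_, ?_, ?_⟩
  · have H := hasDerivAt_x f hf A hA
    have hz : (∑' p : {p : ℤ × ℤ // p ≠ 0}, deriv f (Qf (1/2) (Real.sqrt 3 / 2) A p.1) *
        (A * (2 * ((p.1.1 : ℝ) + (1/2) * p.1.2) * p.1.2 / (Real.sqrt 3 / 2)))) = 0 := by
      apply tsum_orbit_zero (fun q => deriv f (Qf (1/2) (Real.sqrt 3 / 2) A q) *
        (A * (2 * ((q.1 : ℝ) + (1/2) * q.2) * q.2 / (Real.sqrt 3 / 2))))
      rintro ⟨m, n⟩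
      simp only [rot_apply, Qf_eq_x]
      push_cast
      ring_nf
    rw [hz] at H
    exact H
  · have H := hasDerivAt_y f hf A hA
    have hz : (∑' p : {p : ℤ × ℤ // p ≠ 0}, deriv f (Qf (1/2) (Real.sqrt 3 / 2) A p.1) *
        (A * ((p.1.2 : ℝ) ^ 2 - ((p.1.1 : ℝ) + 1/2 * p.1.2) ^ 2 / (Real.sqrt 3 / 2) ^ 2))) = 0 := by
      apply tsum_orbit_zero (fun q => deriv f (Qf (1/2) (Real.sqrt 3 / 2) A q) *
        (A * ((q.2 : ℝ) ^ 2 - ((q.1 : ℝ) + 1/2 * q.2) ^ 2 / (Real.sqrt 3 / 2) ^ 2)))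
      rintro ⟨m, n⟩
      simp only [rot_apply, Qf_eq_x, h34]
      push_cast
      ring_nf
    rw [hz] at H
    exact H
  · apply tsum_orbit_zero (fun q => ((q.1 : ℝ) * (q.2 : ℝ) + (q.2 : ℝ) ^ 2 / 2) *
      deriv f ((2 * A / Real.sqrt 3) * ((q.1 : ℝ) ^ 2 + (q.1 : ℝ) * (q.2 : ℝ) + (q.2 : ℝ) ^ 2)))
    rintro ⟨m, n⟩
    simp only [rot_apply]
    push_cast
    ring_nf
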